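/- Let A be a real n×n matrix and let P and Q be symmetric positive definite n×n matrices satisfying the Lyapunov matrix equation P·A + Aᵀ·P = −Q. Let g : ℝⁿ → ℝⁿ be continuous with the property that for every ε > 0 there exists δ > 0 such that ‖x‖ < δ implies ‖g(x)‖ ≤ ε·‖x‖ (i.e., ‖g(x)‖/‖x‖ → 0 as x → 0). Then there exists c > 0 such that for every x ≠ 0 with xᵀ P x ≤ c, one has 2·xᵀ P (A x + g(x)) < 0; i.e., the quadratic Lyapunov function V_P(x) = xᵀ P x is strictly decreasing along the nonlinear dynamics ẋ = A x + g(x) on the punctured sublevel set {x ≠ 0 : V_P(x) ≤ c}. -/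

import Mathlib

open Matrix

theorem quadratic_lyapunov_local_decrease {n : ℕ}
    (A P Q : Matrix (Fin n) (Fin n) ℝ)
    (hPsymm : P.IsSymm) (hQsymm : Q.IsSymm)
    (hPpos : ∀ x : EuclideanSpace ℝ (Fin n), x ≠ 0 → 0 < dotProduct x (P.mulVec x))
    (hQpos : ∀ x : EuclideanSpace ℝ (Fin n), x ≠ 0 → 0 < dotProduct x (Q.mulVec x))
    (hlyap : P * A + Aᵀ * P = -Q)
    (g : EuclideanSpace ℝ (Fin n) → EuclideanSpace ℝ (Fin n))
    (hg : Continuous g)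
    (hsmall : ∀ ε > (0 : ℝ), ∃ δ > (0 : ℝ),
        ∀ x : EuclideanSpace ℝ (Fin n), ‖x‖ < δ → ‖g x‖ ≤ ε * ‖x‖) :
    ∃ c > (0 : ℝ), ∀ x : EuclideanSpace ℝ (Fin n), x ≠ 0 →
      dotProduct x (P.mulVec x) ≤ c →
      2 * dotProduct x (P.mulVec (A.mulVec x + fun i => g x i)) < 0 := by
  classical
  rcases Nat.eq_zero_or_pos n with h0 | hn
  · subst h0
    exact ⟨1, one_pos, fun x hx _ => absurd (Subsingleton.elim x 0) hx⟩
  haveI : Nonempty (Fin n) := Fin.pos_iff_nonempty.mp hn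
  -- inner = dotProduct
  have hinner : ∀ x y : EuclideanSpace ℝ (Fin n), inner ℝ x y = dotProduct x y := by
    intro x y; simp [PiLp.inner_apply, dotProduct, mul_comm]
  have hquad_cont : ∀ M : Matrix (Fin n) (Fin n) ℝ,
      Continuous fun x : EuclideanSpace ℝ (Fin n) => dotProduct x (M.mulVec x) := by
    intro M
    have heq : (fun x : EuclideanSpace ℝ (Fin n) => dotProduct x (M.mulVec x))
        = fun x : EuclideanSpace ℝ (Fin n) =>
          inner ℝ x ((Matrix.toEuclideanLin M).toContinuousLinearMap x) := by
      funext x; rw [hinner]; rfl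
    rw [heq]
    exact continuous_id.inner ((Matrix.toEuclideanLin M).toContinuousLinearMap).continuous
  -- positive lower bound for a positive definite quadratic form
  have sphere_min : ∀ M : Matrix (Fin n) (Fin n) ℝ,
      (∀ x : EuclideanSpace ℝ (Fin n), x ≠ 0 → 0 < dotProduct x (M.mulVec x)) →
      ∃ m > (0:ℝ), ∀ x : EuclideanSpace ℝ (Fin n),
        m * ‖x‖ ^ 2 ≤ dotProduct x (M.mulVec x) := by
    intro M hM
    have hsph : (Metric.sphere (0:EuclideanSpace ℝ (Fin n)) 1).Nonempty :=
      NormedSpace.sphere_nonempty.2 zero_le_one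
    obtain ⟨x0, hx0, hmin⟩ := (isCompact_sphere (0:EuclideanSpace ℝ (Fin n)) 1).exists_isMinOn
      hsph ((hquad_cont M).continuousOn)
    have hx0norm : ‖x0‖ = 1 := by simpa using hx0
    have hx0ne : x0 ≠ 0 := by intro h; rw [h] at hx0norm; simp at hx0norm
    refine ⟨dotProduct x0 (M.mulVec x0), hM x0 hx0ne, fun x => ?_⟩
    rcases eq_or_ne x 0 with rfl | hx
    · simp [Matrix.mulVec_zero]
    · have hxn : (0:ℝ) < ‖x‖ := norm_pos_iff.2 hx
      set u : EuclideanSpace ℝ (Fin n) := ‖x‖⁻¹ • x with hu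
      have hunorm : ‖u‖ = 1 := by
        rw [hu, norm_smul]; simp [abs_of_pos hxn, inv_mul_cancel₀ hxn.ne']
      have hmem : u ∈ Metric.sphere (0:EuclideanSpace ℝ (Fin n)) 1 := by simpa using hunorm
      have hle : dotProduct x0 (M.mulVec x0) ≤ dotProduct u (M.mulVec u) := hmin hmem
      have hscale : dotProduct u (M.mulVec u)
          = ‖x‖⁻¹ * ‖x‖⁻¹ * dotProduct x (M.mulVec x) := by
        show dotProduct (‖x‖⁻¹ • (x : Fin n → ℝ)) (M.mulVec (‖x‖⁻¹ • (x : Fin n → ℝ))) = _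
        rw [Matrix.mulVec_smul, smul_dotProduct, dotProduct_smul,
          smul_eq_mul, smul_eq_mul]
        ring
      rw [hscale] at hle
      have h3 : ‖x‖⁻¹ * ‖x‖⁻¹ * ‖x‖ ^ 2 = 1 := by rw [sq]; field_simp
      calc dotProduct x0 (M.mulVec x0) * ‖x‖ ^ 2
          ≤ ‖x‖⁻¹ * ‖x‖⁻¹ * dotProduct x (M.mulVec x) * ‖x‖ ^ 2 :=
            mul_le_mul_of_nonneg_right hle (sq_nonneg _)
        _ = dotProduct x (M.mulVec x) * (‖x‖⁻¹ * ‖x‖⁻¹ * ‖x‖ ^ 2) := by ring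
        _ = dotProduct x (M.mulVec x) := by rw [h3, mul_one]
  obtain ⟨mQ, hmQ, hQbound⟩ := sphere_min Q hQpos
  obtain ⟨mP, hmP, hPbound⟩ := sphere_min P hPpos
  -- operator norm bound for P
  set T : EuclideanSpace ℝ (Fin n) →L[ℝ] EuclideanSpace ℝ (Fin n) :=
    (Matrix.toEuclideanLin P).toContinuousLinearMap with hT
  have hTnn : (0:ℝ) ≤ ‖T‖ := norm_nonneg T
  set ε : ℝ := mQ / (4 * (‖T‖ + 1)) with hε
  have hεpos : 0 < ε := by positivity
  obtain ⟨δ, hδpos, hδ⟩ := hsmall ε hεpos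
  refine ⟨mP * δ ^ 2 / 2, by positivity, fun x hx hxc => ?_⟩
  have hxn : (0:ℝ) < ‖x‖ := norm_pos_iff.2 hx
  have hxδ : ‖x‖ < δ := by
    by_contra hcon
    push_neg at hcon
    have hsq : δ ^ 2 ≤ ‖x‖ ^ 2 := by nlinarith
    have h1 := hPbound x
    nlinarith [mul_le_mul_of_nonneg_left hsq (le_of_lt hmP), mul_pos hmP (pow_pos hδpos 2)]
  have hgx : ‖g x‖ ≤ ε * ‖x‖ := hδ x hxδ
  -- symmetry of P as a bilinear identity
  have hPsym' : ∀ y z : Fin n → ℝ,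
      dotProduct y (P.mulVec z) = dotProduct z (P.mulVec y) := by
    intro y z
    rw [Matrix.dotProduct_mulVec, ← Matrix.mulVec_transpose, hPsymm, dotProduct_comm]
  -- Lyapunov identity
  have hlyap' : dotProduct (x : Fin n → ℝ) (P.mulVec (A.mulVec x))
      + dotProduct (x : Fin n → ℝ) (P.mulVec (A.mulVec x))
      = - dotProduct (x : Fin n → ℝ) (Q.mulVec x) := by
    have h := congrArg (fun M => dotProduct (x : Fin n → ℝ) (M.mulVec (x : Fin n → ℝ))) hlyap
    simp only [Matrix.add_mulVec, dotProduct_add, Matrix.neg_mulVec,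
      dotProduct_neg, ← Matrix.mulVec_mulVec] at h
    have h2 : dotProduct (x : Fin n → ℝ) (Aᵀ.mulVec (P.mulVec x))
        = dotProduct (x : Fin n → ℝ) (P.mulVec (A.mulVec x)) := by
      rw [Matrix.dotProduct_mulVec, Matrix.vecMul_transpose, ← hPsym' (A.mulVec x) x]
    rw [h2] at h
    exact h
  -- cross term bound
  have hcross : |dotProduct (x : Fin n → ℝ) (P.mulVec (g x))| ≤ ‖x‖ * (‖T‖ * ‖g x‖) := by
    have h1 : dotProduct (x : Fin n → ℝ) (P.mulVec (g x)) = inner ℝ x (T (g x)) :=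
      (hinner x (T (g x))).symm
    rw [h1]
    calc |inner ℝ x (T (g x))| ≤ ‖x‖ * ‖T (g x)‖ := abs_real_inner_le_norm _ _
      _ ≤ ‖x‖ * (‖T‖ * ‖g x‖) :=
          mul_le_mul_of_nonneg_left (T.le_opNorm (g x)) (norm_nonneg x)
  have hsplit : dotProduct (x : Fin n → ℝ) (P.mulVec (A.mulVec x + fun i => g x i))
      = dotProduct (x : Fin n → ℝ) (P.mulVec (A.mulVec x))
        + dotProduct (x : Fin n → ℝ) (P.mulVec (g x)) := by
    rw [Matrix.mulVec_add, dotProduct_add]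
  rw [hsplit]
  have hQx := hQbound x
  have habs := abs_le.1 hcross
  have hεbound : ε * (4 * (‖T‖ + 1)) = mQ := by
    rw [hε]; field_simp
  nlinarith [mul_le_mul_of_nonneg_left hgx (mul_nonneg (norm_nonneg x) hTnn),
    sq_nonneg ‖x‖, mul_pos hxn hxn, norm_nonneg (g x),
    mul_le_mul_of_nonneg_left hgx (le_of_lt hxn)]
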